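/- If S is the first isodynamic point of triangle ABC (interior, all angles < 120°), then ∠ASB = ∠ACB + 60°. -/

import Mathlib

open EuclideanGeometry Real

set_option maxHeartbeats 2000000

noncomputable section

abbrev Pt := EuclideanSpace ℝ (Fin 2)

/-- `S` is the first isodynamic point of triangle `ABC`: it lies on the three
Apollonius circles (e.g. the `A`-Apollonius circle is the locus of `P` with
`PB/PC = AB/AC`) and lies inside the circumcircle. -/
def IsFirstIsodynamic (A B C S : Pt) : Prop :=
  dist S B * dist A C = dist S C * dist A B ∧
  dist S A * dist B C = dist S C * dist B A ∧
  dist S A * dist C B = dist S B * dist C A ∧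
  ∃ O r, dist O A = r ∧ dist O B = r ∧ dist O C = r ∧ dist O S < r

lemma dsq (u v : Pt) : dist u v ^ 2 = (u 0 - v 0) ^ 2 + (u 1 - v 1) ^ 2 := by
  rw [EuclideanSpace.dist_eq, Real.sq_sqrt (by positivity)]
  simp [Fin.sum_univ_two, Real.dist_eq, sq_abs]

/-- Core algebraic lemma, with `C` translated to the origin:
`p = A - C`, `q = B - C`, `s = S - C`, `o = O - C`. -/
lemma branch (E K D pw : ℝ) (hE : E = 2*(pw*D)*D) (hpw : pw < 0) (hD : D ≠ 0)
    (hE2 : E^2 = 3*K^2*D^2) (hK : 0 ≤ K) : E = -(Real.sqrt 3 * K * |D|) := by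
  have hD2 : 0 < D^2 := by positivity
  have hEneg : E < 0 := by
    rw [hE]
    nlinarith [mul_neg_of_neg_of_pos hpw hD2]
  have h1 : -E = Real.sqrt (E^2) := by
    rw [Real.sqrt_sq_eq_abs, abs_of_neg hEneg]
  have h2 : Real.sqrt (E^2) = Real.sqrt 3 * K * |D| := by
    rw [hE2, show 3*K^2*D^2 = 3*(K^2*(D^2)) by ring,
      Real.sqrt_mul (by norm_num : (0:ℝ) ≤ 3),
      Real.sqrt_mul (by positivity : (0:ℝ) ≤ K^2),
      Real.sqrt_sq hK, Real.sqrt_sq_eq_abs]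
    ring
  linarith [h1.trans h2]

lemma key (p0 p1 q0 q1 s0 s1 o0 o1 r : ℝ)
    (hg1 : ((s0-p0)^2+(s1-p1)^2) * (q0^2+q1^2)
        = (s0^2+s1^2) * ((p0-q0)^2+(p1-q1)^2))
    (hg2 : ((s0-q0)^2+(s1-q1)^2) * (p0^2+p1^2)
        = (s0^2+s1^2) * ((p0-q0)^2+(p1-q1)^2))
    (ho1 : (o0-p0)^2+(o1-p1)^2 = r^2)
    (ho2 : (o0-q0)^2+(o1-q1)^2 = r^2)
    (ho3 : o0^2+o1^2 = r^2)
    (hin : (s0-o0)^2+(s1-o1)^2 < r^2)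
    (hD : q0*p1 - q1*p0 ≠ 0) :
    2*(((s0-p0)^2+(s1-p1)^2) + ((s0-q0)^2+(s1-q1)^2) - ((p0-q0)^2+(p1-q1)^2))
        * ((q0^2+q1^2)*(p0^2+p1^2))
      = (s0^2+s1^2)*((p0-q0)^2+(p1-q1)^2)
          * ((q0^2+q1^2)+(p0^2+p1^2)-((p0-q0)^2+(p1-q1)^2))
        - 2*Real.sqrt 3 * ((s0^2+s1^2)*((p0-q0)^2+(p1-q1)^2)) * |q0*p1-q1*p0| := by
  -- abbreviations
  have hW : ((s0-o0)^2+(s1-o1)^2 - r^2) * (q0*p1 - q1*p0)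
      = (s0^2+s1^2)*(q0*p1-q1*p0) - (p0^2+p1^2)*(q0*s1-q1*s0)
        + (q0^2+q1^2)*(p0*s1-p1*s0) := by
    linear_combination (q0*s1-q1*s0)*ho1 - (p0*s1-p1*s0)*ho2
      + ((q0*p1-q1*p0) - (q0*s1-q1*s0) + (p0*s1-p1*s0))*ho3
  have hEW : 2*((s0-p0)*(s0-q0)+(s1-p1)*(s1-q1)) * ((q0^2+q1^2)*(p0^2+p1^2))
        - (s0^2+s1^2)*((p0-q0)^2+(p1-q1)^2) * (p0*q0+p1*q1)
      = 2*((s0^2+s1^2)*(q0*p1-q1*p0) - (p0^2+p1^2)*(q0*s1-q1*s0)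
          + (q0^2+q1^2)*(p0*s1-p1*s0)) * (q0*p1-q1*p0) := by
    linear_combination (p0*q0+p1*q1)*hg1 + (p0*q0+p1*q1)*hg2
  have hW2 : 4*((s0^2+s1^2)*(q0*p1-q1*p0) - (p0^2+p1^2)*(q0*s1-q1*s0)
          + (q0^2+q1^2)*(p0*s1-p1*s0))^2
      = 3*((s0^2+s1^2)*((p0-q0)^2+(p1-q1)^2))^2 := by
    linear_combination
      (((q0^2+q1^2) + 3*(p0^2+p1^2) - 4*(p0*q0+p1*q1))*(s0^2+s1^2)
        + 2*((q0^2+q1^2)*(p0*s0+p1*s1) - (p0^2+p1^2)*(q0*s0+q1*s1)))*hg1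
      + ((3*(q0^2+q1^2) + (p0^2+p1^2) - 4*(p0*q0+p1*q1))*(s0^2+s1^2)
        - 2*((q0^2+q1^2)*(p0*s0+p1*s1) - (p0^2+p1^2)*(q0*s0+q1*s1)))*hg2
  have hE : 2*((s0-p0)*(s0-q0)+(s1-p1)*(s1-q1)) * ((q0^2+q1^2)*(p0^2+p1^2))
        - (s0^2+s1^2)*((p0-q0)^2+(p1-q1)^2) * (p0*q0+p1*q1)
      = 2*((((s0-o0)^2+(s1-o1)^2 - r^2) * (q0*p1 - q1*p0))*(q0*p1 - q1*p0)) := by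
    rw [hW]; linear_combination hEW
  have hE2 : (2*((s0-p0)*(s0-q0)+(s1-p1)*(s1-q1)) * ((q0^2+q1^2)*(p0^2+p1^2))
        - (s0^2+s1^2)*((p0-q0)^2+(p1-q1)^2) * (p0*q0+p1*q1))^2
      = 3*((s0^2+s1^2)*((p0-q0)^2+(p1-q1)^2))^2*(q0*p1 - q1*p0)^2 := by
    rw [hEW]; linear_combination (q0*p1 - q1*p0)^2 * hW2
  have hfin := branch
      (2*((s0-p0)*(s0-q0)+(s1-p1)*(s1-q1)) * ((q0^2+q1^2)*(p0^2+p1^2))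
        - (s0^2+s1^2)*((p0-q0)^2+(p1-q1)^2) * (p0*q0+p1*q1))
      ((s0^2+s1^2)*((p0-q0)^2+(p1-q1)^2))
      (q0*p1 - q1*p0)
      ((s0-o0)^2+(s1-o1)^2 - r^2)
      (by linear_combination hE) (by linarith) hD hE2 (by positivity)
  linear_combination 2*hfin

theorem stmt5 (A B C S : Pt)
    (hABC : AffineIndependent ℝ ![A, B, C])
    (hA : ∠ B A C < 2 * π / 3) (hB : ∠ A B C < 2 * π / 3) (hC : ∠ B C A < 2 * π / 3)
    (hS : IsFirstIsodynamic A B C S) :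
    ∠ A S B = ∠ A C B + π / 3 := by
  obtain ⟨h1, h2, -, O, r, hOA, hOB, hOC, hOS⟩ := hS
  have hinj := hABC.injective
  have hAB : A ≠ B := by
    have := hinj.ne (show (0:Fin 3) ≠ 1 by decide); simpa using this
  have hAC : A ≠ C := by
    have := hinj.ne (show (0:Fin 3) ≠ 2 by decide); simpa using this
  have hBC : B ≠ C := by
    have := hinj.ne (show (1:Fin 3) ≠ 2 by decide); simpa using this
  have haP : 0 < dist B C := dist_pos.mpr hBC
  have hbP : 0 < dist A C := dist_pos.mpr hAC
  have hcP : 0 < dist A B := dist_pos.mpr hAB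
  have hSA : S ≠ A := by
    intro h
    rw [h, dist_self, zero_mul] at h2
    have : 0 < dist A C * dist B A := by
      have : 0 < dist B A := dist_pos.mpr (Ne.symm hAB)
      positivity
    linarith [h2 ▸ this]
  have hSB : S ≠ B := by
    intro h
    rw [h, dist_self, zero_mul] at h1
    have : 0 < dist B C * dist A B := by positivity
    linarith [h1 ▸ this]
  have hSC : S ≠ C := by
    intro h
    rw [h, dist_self, zero_mul] at h2
    have h2' : dist C A * dist B C = 0 := h2
    have : 0 < dist C A * dist B C := by
      have : 0 < dist C A := dist_pos.mpr (Ne.symm hAC)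
      positivity
    linarith
  have hxP : 0 < dist S A := dist_pos.mpr hSA
  have hyP : 0 < dist S B := dist_pos.mpr hSB
  have hzP : 0 < dist S C := dist_pos.mpr hSC
  -- nondegeneracy: the cross product of A-C, B-C is nonzero
  have hD : (B 0 - C 0)*(A 1 - C 1) - (B 1 - C 1)*(A 0 - C 0) ≠ 0 := by
    intro hD0
    apply affineIndependent_iff_not_collinear.mp hABC
    have hCmem : C ∈ Set.range ![A, B, C] := ⟨2, by simp⟩
    rw [collinear_iff_of_mem hCmem]
    by_cases hpz : A 0 - C 0 = 0 ∧ A 1 - C 1 = 0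
    · exfalso
      apply hAC
      have e0 : A 0 = C 0 := by linarith [hpz.1]
      have e1 : A 1 = C 1 := by linarith [hpz.2]
      ext i
      fin_cases i
      exacts [e0, e1]
    · have hp2 : (A 0 - C 0)^2 + (A 1 - C 1)^2 ≠ 0 := by
        intro h
        exact hpz ⟨by nlinarith [sq_nonneg (A 0 - C 0), sq_nonneg (A 1 - C 1)],
          by nlinarith [sq_nonneg (A 0 - C 0), sq_nonneg (A 1 - C 1)]⟩
      have hsmul : ∀ (t : ℝ) (j : Fin 2), ((t • (A - C) +ᵥ C : Pt)) j = t * (A j - C j) + C j := by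
        intro t j
        simp [PiLp.smul_apply, PiLp.sub_apply, PiLp.add_apply]
      refine ⟨A - C, ?_⟩
      rintro p ⟨i, rfl⟩
      set t : ℝ := ((B 0 - C 0)*(A 0 - C 0) + (B 1 - C 1)*(A 1 - C 1))
            / ((A 0 - C 0)^2 + (A 1 - C 1)^2) with ht
      have hB0 : B 0 = t * (A 0 - C 0) + C 0 := by
        rw [ht]
        field_simp
        first
        | linear_combination (A 1 - C 1) * hD0
        | linear_combination (-(A 1 - C 1)) * hD0
        | linear_combination (2*(A 1 - C 1)) * hD0
        | linear_combination (-2*(A 1 - C 1)) * hD0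
      have hB1 : B 1 = t * (A 1 - C 1) + C 1 := by
        rw [ht]
        field_simp
        first
        | linear_combination (A 0 - C 0) * hD0
        | linear_combination (-(A 0 - C 0)) * hD0
        | linear_combination (2*(A 0 - C 0)) * hD0
        | linear_combination (-2*(A 0 - C 0)) * hD0
      fin_cases i
      · refine ⟨1, ?_⟩
        show A = (1:ℝ) • (A - C) +ᵥ C
        ext j
        rw [hsmul]
        ring
      · refine ⟨t, ?_⟩
        show B = t • (A - C) +ᵥ C
        ext j
        rw [hsmul]
        fin_cases j
        exacts [hB0, hB1]
      · refine ⟨0, ?_⟩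
        show C = (0:ℝ) • (A - C) +ᵥ C
        ext j
        rw [hsmul]
        ring
  -- squared hypotheses in coordinates, feeding the key lemma
  have hg1 : (((S 0 - C 0)-(A 0 - C 0))^2+((S 1 - C 1)-(A 1 - C 1))^2)
        * ((B 0 - C 0)^2+(B 1 - C 1)^2)
      = ((S 0 - C 0)^2+(S 1 - C 1)^2)
        * (((A 0 - C 0)-(B 0 - C 0))^2+((A 1 - C 1)-(B 1 - C 1))^2) := by
    have hsq : dist S A ^2 * dist B C ^2 = dist S C ^2 * dist B A ^2 := by
      rw [← mul_pow, ← mul_pow, h2]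
    rw [dsq S A, dsq B C, dsq S C, dsq B A] at hsq
    linear_combination hsq
  have hg2 : (((S 0 - C 0)-(B 0 - C 0))^2+((S 1 - C 1)-(B 1 - C 1))^2)
        * ((A 0 - C 0)^2+(A 1 - C 1)^2)
      = ((S 0 - C 0)^2+(S 1 - C 1)^2)
        * (((A 0 - C 0)-(B 0 - C 0))^2+((A 1 - C 1)-(B 1 - C 1))^2) := by
    have hsq : dist S B ^2 * dist A C ^2 = dist S C ^2 * dist A B ^2 := by
      rw [← mul_pow, ← mul_pow, h1]
    rw [dsq S B, dsq A C, dsq S C, dsq A B] at hsq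
    linear_combination hsq
  have ho1 : ((O 0 - C 0)-(A 0 - C 0))^2+((O 1 - C 1)-(A 1 - C 1))^2 = r^2 := by
    have hsq : dist O A ^2 = r^2 := by rw [hOA]
    rw [dsq O A] at hsq
    linear_combination hsq
  have ho2 : ((O 0 - C 0)-(B 0 - C 0))^2+((O 1 - C 1)-(B 1 - C 1))^2 = r^2 := by
    have hsq : dist O B ^2 = r^2 := by rw [hOB]
    rw [dsq O B] at hsq
    linear_combination hsq
  have ho3 : (O 0 - C 0)^2+(O 1 - C 1)^2 = r^2 := by
    have hsq : dist O C ^2 = r^2 := by rw [hOC]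
    rw [dsq O C] at hsq
    linear_combination hsq
  have hin : ((S 0 - C 0)-(O 0 - C 0))^2+((S 1 - C 1)-(O 1 - C 1))^2 < r^2 := by
    have h0 : (0:ℝ) ≤ dist O S := dist_nonneg
    have hsq : dist O S ^2 < r^2 := by nlinarith [hOS]
    rw [dsq O S] at hsq
    nlinarith [hsq]
  have KEY := key (A 0 - C 0) (A 1 - C 1) (B 0 - C 0) (B 1 - C 1)
      (S 0 - C 0) (S 1 - C 1) (O 0 - C 0) (O 1 - C 1) r hg1 hg2 ho1 ho2 ho3 hin hD
  -- rephrase KEY in terms of distances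
  have KEY' : 2*(dist S A^2 + dist S B^2 - dist A B^2)*(dist B C^2 * dist A C^2)
      = dist S C^2 * dist A B^2 * (dist B C^2 + dist A C^2 - dist A B^2)
        - 2*Real.sqrt 3 * (dist S C^2 * dist A B^2)
          * |(B 0 - C 0)*(A 1 - C 1) - (B 1 - C 1)*(A 0 - C 0)| := by
    rw [dsq S A, dsq S B, dsq A B, dsq B C, dsq A C, dsq S C]
    linear_combination KEY
  -- law of cosines at S and at C
  have lcS := EuclideanGeometry.law_cos A S B (V := Pt)
  rw [dist_comm A S, dist_comm B S] at lcS
  have lcC := EuclideanGeometry.law_cos A C B (V := Pt)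
  have hcaS : Real.cos (∠ A S B) * (2*(dist S A * dist S B))
      = dist S A^2 + dist S B^2 - dist A B^2 := by
    linear_combination lcS
  have hccab : Real.cos (∠ A C B) * (dist A C * dist B C)
      = (dist A C^2 + dist B C^2 - dist A B^2)/2 := by
    linear_combination (1/2)*lcC
  -- sine of angle C in terms of the cross product
  have hs0 : 0 ≤ Real.sin (∠ A C B) :=
    Real.sin_nonneg_of_nonneg_of_le_pi (angle_nonneg _ _ _) (angle_le_pi _ _ _)
  have hsc : Real.sin (∠ A C B)^2 + Real.cos (∠ A C B)^2 = 1 := Real.sin_sq_add_cos_sq _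
  have hs1 : (Real.sin (∠ A C B) * (dist A C * dist B C))^2
      = ((B 0 - C 0)*(A 1 - C 1) - (B 1 - C 1)*(A 0 - C 0))^2 := by
    have e1 : dist A C^2 * dist B C^2
          - ((dist A C^2 + dist B C^2 - dist A B^2)/2)^2
        = ((B 0 - C 0)*(A 1 - C 1) - (B 1 - C 1)*(A 0 - C 0))^2 := by
      rw [dsq A C, dsq B C, dsq A B]; ring
    calc (Real.sin (∠ A C B) * (dist A C * dist B C))^2
        = (1 - Real.cos (∠ A C B)^2) * (dist A C^2 * dist B C^2) := by
          rw [show (1:ℝ) - Real.cos (∠ A C B)^2 = Real.sin (∠ A C B)^2 by linarith]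
          ring
      _ = dist A C^2 * dist B C^2
          - (Real.cos (∠ A C B) * (dist A C * dist B C))^2 := by ring
      _ = ((B 0 - C 0)*(A 1 - C 1) - (B 1 - C 1)*(A 0 - C 0))^2 := by
          rw [hccab]; exact e1
  have hsab : Real.sin (∠ A C B) * (dist A C * dist B C)
      = |(B 0 - C 0)*(A 1 - C 1) - (B 1 - C 1)*(A 0 - C 0)| := by
    have h0 : 0 ≤ Real.sin (∠ A C B) * (dist A C * dist B C) := by positivity
    calc Real.sin (∠ A C B) * (dist A C * dist B C)
        = Real.sqrt ((Real.sin (∠ A C B) * (dist A C * dist B C))^2) :=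
          (Real.sqrt_sq h0).symm
      _ = Real.sqrt (((B 0 - C 0)*(A 1 - C 1) - (B 1 - C 1)*(A 0 - C 0))^2) := by rw [hs1]
      _ = _ := Real.sqrt_sq_eq_abs _
  -- the products relation from the Apollonius conditions
  have hxy : (dist S A * dist S B) * (dist B C * dist A C) = (dist S C * dist A B)^2 := by
    have h2' : dist S A * dist B C = dist S C * dist A B := by
      rw [dist_comm B A] at h2; exact h2
    have h1' : dist S B * dist A C = dist S C * dist A B := h1
    calc (dist S A * dist S B) * (dist B C * dist A C)
        = (dist S A * dist B C) * (dist S B * dist A C) := by ring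
      _ = (dist S C * dist A B) * (dist S C * dist A B) := by rw [h2', h1']
      _ = (dist S C * dist A B)^2 := by ring
  -- cosine equality
  have hcos : Real.cos (∠ A S B) = Real.cos (∠ A C B + π/3) := by
    rw [Real.cos_add, Real.cos_pi_div_three, Real.sin_pi_div_three]
    have hne : (2*(dist S A * dist S B)*(dist B C^2 * dist A C^2)) ≠ 0 := by positivity
    apply mul_left_cancel₀ hne
    linear_combination (dist B C^2 * dist A C^2) * hcaS + (1/2) * KEY'
      + (-((dist S A * dist S B)*(dist B C * dist A C))) * hccab
      + (-(dist B C^2 + dist A C^2 - dist A B^2)/2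
          + Real.sqrt 3 * |(B 0 - C 0)*(A 1 - C 1) - (B 1 - C 1)*(A 0 - C 0)|) * hxy
      + (Real.sqrt 3 * ((dist S A * dist S B)*(dist B C * dist A C))) * hsab
  -- conclude via injectivity of cos on [0, π]
  have hACB : ∠ A C B = ∠ B C A := angle_comm _ _ _
  have hpi : 0 < π := Real.pi_pos
  apply Real.injOn_cos ⟨angle_nonneg _ _ _, angle_le_pi _ _ _⟩
    ⟨add_nonneg (angle_nonneg _ _ _) (by positivity), by rw [hACB]; linarith⟩ hcos
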